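/- Let β > 1, K₁ > 0, K₂ > 0, D_max > 0 with K₂ > D_max, and let d : ℝ → ℝ satisfy |d(t)| ≤ D_max for all t. Let x₁, x₂ be differentiable at a time t with x₁(t) ≠ 0 and z₂(t) ≠ 0, where z₂ = x₂ + K₁·sign(x₁)·|x₁|^(|x₁|^β), satisfying ẋ₁(t) = x₂(t), ẋ₂(t) = u(t) + d(t) with u = −K₂·sign(z₂) − ( x₁ + K₁·|x₁|^(|x₁|^β + β − 1)·(1 + β·ln|x₁|)·(−K₁·sign(x₁)·|x₁|^(|x₁|^β) + z₂) ). Then V₂ = x₁²/2 + z₂²/2 is differentiable at t with V̇₂(t) = −K₁·|x₁(t)|^(1 + |x₁(t)|^β) + z₂(t)·(−K₂·sign(z₂(t)) + d(t)), and consequently V̇₂(t) ≤ −K₁·|x₁(t)|^(1 + |x₁(t)|^β) − (K₂ − D_max)·|z₂(t)| < 0. -/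

import Mathlib

lemma tower_deriv_pos (β : ℝ) {y : ℝ} (hy : 0 < y) :
    HasDerivAt (fun z : ℝ => Real.sign z * |z| ^ (|z| ^ β))
      (|y| ^ (|y| ^ β + β - 1) * (1 + β * Real.log |y|)) y := by
  have hne : y ≠ 0 := ne_of_gt hy
  have h1 : HasDerivAt (fun z : ℝ => z ^ β) (β * y ^ (β - 1)) y :=
    Real.hasDerivAt_rpow_const (Or.inl hne)
  have h2 : HasDerivAt Real.log y⁻¹ y := Real.hasDerivAt_log hne
  have h3 : HasDerivAt (fun z : ℝ => z ^ β * Real.log z)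
      (β * y ^ (β - 1) * Real.log y + y ^ β * y⁻¹) y := h1.mul h2
  have h4 := h3.exp
  have heq : (fun z : ℝ => Real.sign z * |z| ^ (|z| ^ β)) =ᶠ[nhds y]
      (fun z : ℝ => Real.exp (z ^ β * Real.log z)) := by
    filter_upwards [eventually_gt_nhds hy] with z hz
    rw [Real.sign_of_pos hz, abs_of_pos hz, one_mul, Real.rpow_def_of_pos hz, mul_comm]
  have h5 := h4.congr_of_eventuallyEq heq
  refine h5.congr_deriv (Eq.symm ?_)
  rw [abs_of_pos hy]
  rw [show y ^ β * Real.log y = Real.log y * y ^ β by ring, ← Real.rpow_def_of_pos hy]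
  rw [show (y:ℝ) ^ β + β - 1 = y ^ β + (β - 1) by ring, Real.rpow_add hy]
  have h6 : y ^ β * y⁻¹ = y ^ (β - 1) := by
    rw [Real.rpow_sub hy, Real.rpow_one, div_eq_mul_inv]
  rw [← h6]; field_simp; ring

lemma tower_deriv (β : ℝ) {y : ℝ} (hy : y ≠ 0) :
    HasDerivAt (fun z : ℝ => Real.sign z * |z| ^ (|z| ^ β))
      (|y| ^ (|y| ^ β + β - 1) * (1 + β * Real.log |y|)) y := by
  rcases hy.lt_or_gt with h | h
  · have hpos := tower_deriv_pos β (neg_pos.mpr h)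
    have h7 := (hpos.comp y (hasDerivAt_neg y)).neg
    have hfun : (fun z : ℝ => -(Real.sign (-z) * |(-z)| ^ (|(-z)| ^ β)))
        = fun z : ℝ => Real.sign z * |z| ^ (|z| ^ β) := by
      funext z; rw [Real.sign_neg, abs_neg]; ring
    simp only [Function.comp_def, Pi.neg_def] at h7
    rw [hfun] at h7
    refine h7.congr_deriv (Eq.symm ?_)
    rw [abs_neg]; ring
  · exact tower_deriv_pos β h


/-- Corollary 1 (Lyapunov computation with bounded perturbation): under the
sign-based power tower backstepping control with K₂ > D_max, V₂ = x₁²/2 + z₂²/2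
satisfies V̇₂ = −K₁·|x₁|^(1+|x₁|^β) + z₂·(−K₂·sign(z₂) + d)
≤ −K₁·|x₁|^(1+|x₁|^β) − (K₂ − D_max)·|z₂| < 0. -/
theorem powerTower_V2_deriv_perturbed (β K₁ K₂ Dmax : ℝ) (hβ : 1 < β)
    (hK₁ : 0 < K₁) (hK₂ : 0 < K₂) (hD : 0 < Dmax) (hKD : Dmax < K₂)
    (d : ℝ → ℝ) (hd : ∀ t, |d t| ≤ Dmax)
    (x₁ x₂ : ℝ → ℝ) (t x₁' x₂' : ℝ)
    (hx₁ : HasDerivAt x₁ x₁' t) (hx₂ : HasDerivAt x₂ x₂' t)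
    (z₂ : ℝ → ℝ)
    (hz₂ : z₂ = fun s : ℝ => x₂ s + K₁ * Real.sign (x₁ s) * |x₁ s| ^ (|x₁ s| ^ β))
    (hne1 : x₁ t ≠ 0) (hne2 : z₂ t ≠ 0)
    (h1 : x₁' = x₂ t)
    (h2 : x₂' = (-K₂ * Real.sign (z₂ t) -
      (x₁ t + K₁ * |x₁ t| ^ (|x₁ t| ^ β + β - 1) * (1 + β * Real.log |x₁ t|) *
        (-K₁ * Real.sign (x₁ t) * |x₁ t| ^ (|x₁ t| ^ β) + z₂ t))) + d t) :
    HasDerivAt (fun s : ℝ => x₁ s ^ 2 / 2 + z₂ s ^ 2 / 2)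
      (-K₁ * |x₁ t| ^ (1 + |x₁ t| ^ β) + z₂ t * (-K₂ * Real.sign (z₂ t) + d t)) t ∧
    -K₁ * |x₁ t| ^ (1 + |x₁ t| ^ β) + z₂ t * (-K₂ * Real.sign (z₂ t) + d t) ≤
      -K₁ * |x₁ t| ^ (1 + |x₁ t| ^ β) - (K₂ - Dmax) * |z₂ t| ∧
    -K₁ * |x₁ t| ^ (1 + |x₁ t| ^ β) - (K₂ - Dmax) * |z₂ t| < 0 := by
  have ha : 0 < |x₁ t| := abs_pos.mpr hne1
  have hzt : z₂ t = x₂ t + K₁ * Real.sign (x₁ t) * |x₁ t| ^ (|x₁ t| ^ β) := by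
    rw [hz₂]
  -- derivative of z₂
  have hF := tower_deriv β hne1
  have hz : HasDerivAt z₂
      (x₂' + K₁ * ((|x₁ t| ^ (|x₁ t| ^ β + β - 1) * (1 + β * Real.log |x₁ t|)) * x₁')) t := by
    rw [hz₂]
    have := hx₂.add (((hF.comp t hx₁)).const_mul K₁)
    refine this.congr_of_eventuallyEq (Filter.Eventually.of_forall fun s => ?_)
    simp only [Pi.add_apply, Function.comp_apply]; ring
  have hV := ((hx₁.pow 2).div_const 2).add ((hz.pow 2).div_const 2)
  have hsgn : x₁ t * Real.sign (x₁ t) = |x₁ t| := by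
    rcases hne1.lt_or_gt with h | h
    · rw [Real.sign_of_neg h, abs_of_neg h]; ring
    · rw [Real.sign_of_pos h, abs_of_pos h]; ring
  have hzsgn : z₂ t * Real.sign (z₂ t) = |z₂ t| := by
    rcases hne2.lt_or_gt with h | h
    · rw [Real.sign_of_neg h, abs_of_neg h]; ring
    · rw [Real.sign_of_pos h, abs_of_pos h]; ring
  have hrpow1 : |x₁ t| ^ (1 + |x₁ t| ^ β) = |x₁ t| * |x₁ t| ^ (|x₁ t| ^ β) := by
    rw [Real.rpow_add ha, Real.rpow_one]
  have hderiv : HasDerivAt (fun s : ℝ => x₁ s ^ 2 / 2 + z₂ s ^ 2 / 2)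
      (-K₁ * |x₁ t| ^ (1 + |x₁ t| ^ β) + z₂ t * (-K₂ * Real.sign (z₂ t) + d t)) t := by
    refine hV.congr_deriv (Eq.symm ?_)
    rw [hrpow1, h2, h1]
    have hx2t : x₂ t = z₂ t - K₁ * Real.sign (x₁ t) * |x₁ t| ^ (|x₁ t| ^ β) := by
      rw [hzt]; ring
    rw [hx2t]
    linear_combination (K₁ * |x₁ t| ^ (|x₁ t| ^ β)) * hsgn
  refine ⟨hderiv, ?_, ?_⟩
  · have hzd : z₂ t * d t ≤ |z₂ t| * Dmax := by
      calc z₂ t * d t ≤ |z₂ t * d t| := le_abs_self _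
        _ = |z₂ t| * |d t| := abs_mul _ _
        _ ≤ |z₂ t| * Dmax := by
            exact mul_le_mul_of_nonneg_left (hd t) (abs_nonneg _)
    nlinarith [hzsgn, hzd]
  · have h8 : 0 < |x₁ t| ^ (1 + |x₁ t| ^ β) := Real.rpow_pos_of_pos ha _
    have h9 : 0 < |z₂ t| := abs_pos.mpr hne2
    nlinarith
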